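/- Let T_l ∈ ℝ^{N×N} be the tridiagonal matrix with diagonal (l, 2, 2, …, 2), l ∈ {1, 2}, and off-diagonal entries −1. Then the eigenvalues of T_l are λ_k = 2 − 2cos(π(k − 1 + l/2)/(N + l/2)) for k = 1, …, N. In particular T₂ is positive definite and T₁ is positive definite with smallest eigenvalue 2 − 2cos(π/(2N+1)) > 0. -/

import Mathlib

open Matrix Real

namespace Stmt17Aux

variable {N : ℕ}

lemma tri_mulVec (l : ℝ) (T : Matrix (Fin N) (Fin N) ℝ)
    (hT : ∀ i j, T i j =
      if i = j then (if (i : ℕ) = 0 then l else 2)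
      else if (i : ℕ) + 1 = (j : ℕ) ∨ (j : ℕ) + 1 = (i : ℕ) then -1 else 0)
    (f : ℕ → ℝ) (i : Fin N) :
    (T *ᵥ fun j : Fin N => f j) i =
      (if (i : ℕ) = 0 then l else 2) * f i
        - (if (i : ℕ) + 1 < N then f ((i : ℕ) + 1) else 0)
        - (if 0 < (i : ℕ) then f ((i : ℕ) - 1) else 0) := by
  have key : ∀ j : Fin N, T i j * f j =
      (if i = j then (if (i : ℕ) = 0 then l else 2) * f j else 0)
      + ((if (j : ℕ) = (i : ℕ) + 1 then -f j else 0)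
      + (if (j : ℕ) + 1 = (i : ℕ) then -f j else 0)) := by
    intro j
    rw [hT]
    rcases eq_or_ne i j with rfl | h1
    · have h2 : ¬((i : ℕ) = (i : ℕ) + 1) := by omega
      have h3 : ¬((i : ℕ) + 1 = (i : ℕ)) := by omega
      rw [if_pos rfl, if_pos rfl, if_neg h2, if_neg h3]
      ring
    · rw [if_neg h1, if_neg h1]
      by_cases h2 : (j : ℕ) = (i : ℕ) + 1
      · rw [if_pos (Or.inl h2.symm), if_pos h2, if_neg (by omega)]
        ring
      · by_cases h3 : (j : ℕ) + 1 = (i : ℕ)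
        · rw [if_pos (Or.inr h3), if_neg h2, if_pos h3]
          ring
        · rw [if_neg (by tauto), if_neg h2, if_neg h3]
          ring
  show ∑ j, T i j * f j = _
  simp only [key]
  rw [Finset.sum_add_distrib, Finset.sum_add_distrib, Finset.sum_ite_eq]
  have s2 : (∑ j : Fin N, if (j : ℕ) = (i : ℕ) + 1 then -f j else 0)
      = -(if (i : ℕ) + 1 < N then f ((i : ℕ) + 1) else 0) := by
    by_cases hiN : (i : ℕ) + 1 < N
    · have hc : ∀ j : Fin N, ((j : ℕ) = (i : ℕ) + 1) = (j = ⟨(i : ℕ) + 1, hiN⟩) := by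
        intro j; rw [Fin.ext_iff]
      simp only [hc]
      rw [Finset.sum_ite_eq' Finset.univ (⟨(i : ℕ) + 1, hiN⟩ : Fin N) (fun j => -f j)]
      simp [hiN]
    · rw [if_neg hiN, neg_zero]
      apply Finset.sum_eq_zero
      intro j _
      rw [if_neg (by have := j.isLt; omega)]
  have s3 : (∑ j : Fin N, if (j : ℕ) + 1 = (i : ℕ) then -f j else 0)
      = -(if 0 < (i : ℕ) then f ((i : ℕ) - 1) else 0) := by
    by_cases hi0 : 0 < (i : ℕ)
    · have hlt : (i : ℕ) - 1 < N := by have := i.isLt; omega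
      have hc : ∀ j : Fin N, ((j : ℕ) + 1 = (i : ℕ)) = (j = ⟨(i : ℕ) - 1, hlt⟩) := by
        intro j; rw [Fin.ext_iff]; simp only [eq_iff_iff]; omega
      simp only [hc]
      rw [Finset.sum_ite_eq' Finset.univ (⟨(i : ℕ) - 1, hlt⟩ : Fin N) (fun j => -f j)]
      simp [hi0]
    · rw [if_neg hi0, neg_zero]
      apply Finset.sum_eq_zero
      intro j _
      rw [if_neg (by omega)]
  rw [s2, s3]
  simp only [Finset.mem_univ, if_pos]
  ring

lemma tri_eig (l : ℝ) (T : Matrix (Fin N) (Fin N) ℝ)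
    (hT : ∀ i j, T i j =
      if i = j then (if (i : ℕ) = 0 then l else 2)
      else if (i : ℕ) + 1 = (j : ℕ) ∨ (j : ℕ) + 1 = (i : ℕ) then -1 else 0)
    (f : ℕ → ℝ) (lam : ℝ)
    (hB : l * f 0 - f 1 = lam * f 0)
    (hA : ∀ j : ℕ, f j + f (j + 2) = (2 - lam) * f (j + 1))
    (hC : f N = 0) :
    T *ᵥ (fun j : Fin N => f j) = lam • fun j : Fin N => f j := by
  have tm := tri_mulVec l T hT f
  funext i
  rw [tm i]
  simp only [Pi.smul_apply, smul_eq_mul]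
  by_cases hi0 : (i : ℕ) = 0
  · rw [if_pos hi0, if_neg (by omega : ¬ 0 < (i : ℕ)), hi0]
    by_cases h1 : (0 : ℕ) + 1 < N
    · rw [if_pos h1]
      simp only [zero_add]
      linarith [hB]
    · have hN1 : N = 1 := by have := i.isLt; omega
      rw [if_neg h1]
      rw [hN1] at hC
      linarith [hB, hC]
  · have hi1 : 0 < (i : ℕ) := by omega
    rw [if_neg hi0, if_pos hi1]
    obtain ⟨m, hm⟩ : ∃ m, (i : ℕ) = m + 1 := ⟨(i : ℕ) - 1, by omega⟩
    have hiN := i.isLt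
    rw [hm]
    simp only [Nat.add_sub_cancel]
    have hAm := hA m
    by_cases h1 : m + 1 + 1 < N
    · rw [if_pos h1]
      linarith
    · have hmN : m + 2 = N := by omega
      rw [if_neg h1]
      rw [← hmN] at hC
      linarith

lemma quad_ident (l : ℝ) (y : ℕ → ℝ) (n : ℕ) :
    ∑ j ∈ Finset.range (n + 1), y j * ((if j = 0 then l else 2) * y j
        - y (j + 1) - (if 0 < j then y (j - 1) else 0))
      = (l - 1) * (y 0) ^ 2 + (∑ i ∈ Finset.range (n + 1), (y i - y (i + 1)) ^ 2)
        + y n * y (n + 1) - y (n + 1) ^ 2 := by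
  induction n with
  | zero => simp
            ring
  | succ m ih =>
      rw [Finset.sum_range_succ, ih, Finset.sum_range_succ (fun i => (y i - y (i + 1)) ^ 2) (m + 1)]
      rw [if_neg (Nat.succ_ne_zero m), if_pos (Nat.succ_pos m)]
      simp only [Nat.add_sub_cancel]
      ring

lemma tri_posdef (hN : 0 < N) (l : ℝ) (hl : 1 ≤ l) (T : Matrix (Fin N) (Fin N) ℝ)
    (hT : ∀ i j, T i j =
      if i = j then (if (i : ℕ) = 0 then l else 2)
      else if (i : ℕ) + 1 = (j : ℕ) ∨ (j : ℕ) + 1 = (i : ℕ) then -1 else 0) :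
    T.PosDef := by
  rw [posDef_iff_dotProduct_mulVec]
  constructor
  · show Tᴴ = T
    ext i j
    rw [conjTranspose_apply, hT, hT]
    rcases eq_or_ne i j with rfl | h
    · simp
    · rw [if_neg (fun hh : j = i => h hh.symm), if_neg h]
      by_cases h1 : (j : ℕ) + 1 = (i : ℕ) ∨ (i : ℕ) + 1 = (j : ℕ)
      · rw [if_pos h1, if_pos (h1.symm)]
        simp
      · rw [if_neg h1, if_neg (fun hh => h1 hh.symm)]
        simp
  · intro x hx
    have hs : star x = x := by
      funext i; simp
    rw [hs]
    set y : ℕ → ℝ := fun j => if h : j < N then x ⟨j, h⟩ else 0 with hy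
    have hyN : ∀ j, N ≤ j → y j = 0 := fun j hj => dif_neg (by omega)
    have hx' : (fun j : Fin N => y j) = x := by
      funext j; simp [hy, j.isLt]
    rw [← hx', dotProduct]
    simp_rw [tri_mulVec l T hT y]
    rw [Fin.sum_univ_eq_sum_range (fun j : ℕ => y j * ((if j = 0 then l else 2) * y j
      - (if j + 1 < N then y (j + 1) else 0) - (if 0 < j then y (j - 1) else 0))) N]
    have hcong : ∀ j ∈ Finset.range N, y j * ((if j = 0 then l else 2) * y j
        - (if j + 1 < N then y (j + 1) else 0) - (if 0 < j then y (j - 1) else 0))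
        = y j * ((if j = 0 then l else 2) * y j - y (j + 1) - (if 0 < j then y (j - 1) else 0)) := by
      intro j hj
      by_cases hc : j + 1 < N
      · rw [if_pos hc]
      · rw [if_neg hc, hyN (j + 1) (by omega)]
    rw [Finset.sum_congr rfl hcong]
    obtain ⟨n, rfl⟩ : ∃ n, N = n + 1 := ⟨N - 1, by omega⟩
    rw [quad_ident l y n, hyN (n + 1) le_rfl]
    simp only [mul_zero, ne_eq, OfNat.ofNat_ne_zero, not_false_eq_true, zero_pow, add_zero,
      sub_zero]
    by_contra hle
    push_neg at hle
    have h1 : 0 ≤ (l - 1) * y 0 ^ 2 := mul_nonneg (by linarith) (sq_nonneg _)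
    have h2 : 0 ≤ ∑ i ∈ Finset.range (n + 1), (y i - y (i + 1)) ^ 2 :=
      Finset.sum_nonneg fun i _ => sq_nonneg _
    have hsq : ∑ i ∈ Finset.range (n + 1), (y i - y (i + 1)) ^ 2 = 0 := by linarith
    have hstep : ∀ i ∈ Finset.range (n + 1), y i = y (i + 1) := by
      intro i hi
      have h3 := (Finset.sum_eq_zero_iff_of_nonneg (fun i _ => sq_nonneg _)).mp hsq i hi
      have h4 : y i - y (i + 1) = 0 := by
        have := sq_eq_zero_iff.mp h3
        exact this
      linarith
    have hall : ∀ k, y (n + 1 - k) = 0 := by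
      intro k
      induction k with
      | zero => simpa using hyN (n + 1) le_rfl
      | succ m ihm =>
          by_cases hc : m ≤ n
          · have h5 := hstep (n + 1 - (m + 1)) (by simp)
            rw [show n + 1 - (m + 1) + 1 = n + 1 - m by omega] at h5
            rw [h5]; exact ihm
          · rw [show n + 1 - (m + 1) = n + 1 - m by omega]; exact ihm
    apply hx
    funext i
    have h6 := hall (n + 1 - (i : ℕ))
    rw [show n + 1 - (n + 1 - (i : ℕ)) = (i : ℕ) by have := i.isLt; omega] at h6
    rw [← congrFun hx' i]
    exact h6

lemma eig_complete (hN : 0 < N) (T : Matrix (Fin N) (Fin N) ℝ) (lam : Fin N → ℝ)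
    (hinj : Function.Injective lam) (V : Fin N → Fin N → ℝ)
    (hV0 : ∀ k, V k ≠ 0) (hTV : ∀ k, T *ᵥ V k = lam k • V k)
    {μ : ℝ} {v : Fin N → ℝ} (hv : v ≠ 0) (hμ : T *ᵥ v = μ • v) : ∃ k, μ = lam k := by
  haveI : Nonempty (Fin N) := ⟨⟨0, hN⟩⟩
  set f : Module.End ℝ (Fin N → ℝ) := T.mulVecLin with hf
  have hev : ∀ k, f.HasEigenvector (lam k) (V k) := by
    intro k
    refine ⟨Module.End.mem_eigenspace_iff.mpr ?_, hV0 k⟩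
    show T *ᵥ V k = lam k • V k
    exact hTV k
  have hli := Module.End.eigenvectors_linearIndependent' f lam hinj V hev
  have hcard : Fintype.card (Fin N) = Module.finrank ℝ (Fin N → ℝ) := by
    simp [Module.finrank_fin_fun]
  let b : Module.Basis (Fin N) ℝ (Fin N → ℝ) := basisOfLinearIndependentOfCardEqFinrank hli hcard
  have hb : ⇑b = V := coe_basisOfLinearIndependentOfCardEqFinrank hli hcard
  set c : Fin N → ℝ := fun k => b.repr v k with hc
  have hsum : ∑ k, c k • V k = v := by
    conv_rhs => rw [← b.sum_repr v]
    rw [hb]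
  have h1 : (T *ᵥ v) = ∑ k, (c k * lam k) • V k := by
    conv_lhs => rw [← hsum]
    rw [show (T *ᵥ ∑ k, c k • V k) = T.mulVecLin (∑ k, c k • V k) from rfl, map_sum]
    refine Finset.sum_congr rfl fun k _ => ?_
    rw [_root_.map_smul]
    show c k • (T *ᵥ V k) = _
    rw [hTV k, smul_smul]
  have h2 : (T *ᵥ v) = ∑ k, (μ * c k) • V k := by
    rw [hμ, ← hsum, Finset.smul_sum]
    exact Finset.sum_congr rfl fun k _ => smul_smul μ (c k) (V k)
  have h3 : (fun k => c k * lam k) = fun k => μ * c k := by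
    have e1 : ⇑(b.repr (∑ k, (c k * lam k) • b k)) = fun k => c k * lam k :=
      b.repr_sum_self _
    have e2 : ⇑(b.repr (∑ k, (μ * c k) • b k)) = fun k => μ * c k :=
      b.repr_sum_self _
    rw [← e1, ← e2]
    congr 1
    rw [hb, ← h1, ← h2]
  have hc0 : ∃ k, c k ≠ 0 := by
    by_contra hcc
    push_neg at hcc
    apply hv
    rw [← hsum]
    refine Finset.sum_eq_zero fun k _ => by rw [hcc k, zero_smul]
  obtain ⟨k, hk⟩ := hc0
  refine ⟨k, ?_⟩
  have h4 := congrFun h3 k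
  have h5 : lam k * c k = μ * c k := by
    rw [← h4]; ring
  exact (mul_right_cancel₀ hk h5).symm

noncomputable def th1 (N k : ℕ) : ℝ := (2 * k + 1) * π / (2 * N + 1)

lemma th1_pos (N k : ℕ) : 0 < th1 N k := by
  unfold th1
  have := Real.pi_pos
  apply div_pos (by positivity) (by positivity)

lemma th1_lt_pi {k : ℕ} (hk : k < N) : th1 N k < π := by
  unfold th1
  have hp := Real.pi_pos
  rw [div_lt_iff₀ (by positivity)]
  have hkN : (k : ℝ) + 1 ≤ (N : ℝ) := by exact_mod_cast hk
  nlinarith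

lemma eigen1 (hN : 0 < N) (T : Matrix (Fin N) (Fin N) ℝ)
    (hT : ∀ i j, T i j =
      if i = j then (if (i : ℕ) = 0 then (1:ℝ) else 2)
      else if (i : ℕ) + 1 = (j : ℕ) ∨ (j : ℕ) + 1 = (i : ℕ) then -1 else 0)
    (k : Fin N) :
    ∃ v : Fin N → ℝ, v ≠ 0 ∧ T *ᵥ v = (2 - 2 * Real.cos (th1 N k)) • v := by
  set θ := th1 N k with hθ
  set a := θ / 2 with ha
  have hθa : θ = 2 * a := by rw [ha]; ring
  set f : ℕ → ℝ := fun n => Real.cos ((2 * n + 1) * a) with hfdef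
  refine ⟨fun j : Fin N => f j, ?_, ?_⟩
  · intro h
    have h0 := congrFun h ⟨0, hN⟩
    have hp := Real.pi_pos
    have hθp := th1_pos N k
    have hθπ := th1_lt_pi k.isLt
    have hpos : 0 < Real.cos a := by
      apply Real.cos_pos_of_mem_Ioo
      constructor
      · rw [ha]; linarith
      · rw [ha]; linarith
    simp only [hfdef, Pi.zero_apply] at h0
    norm_num at h0
    linarith [hpos, h0.le, h0.ge]
  · apply tri_eig 1 T hT f (2 - 2 * Real.cos θ)
    · -- boundary at 0
      have e0 : (2 * ((0:ℕ):ℝ) + 1) * a = a := by push_cast; ring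
      have e1 : (2 * ((1:ℕ):ℝ) + 1) * a = 3 * a := by push_cast; ring
      simp only [hfdef]
      push_cast
      rw [show (2 * (0:ℝ) + 1) * a = a by ring, show (2 * (1:ℝ) + 1) * a = 3 * a by ring,
        hθa, Real.cos_three_mul, Real.cos_two_mul]
      ring
    · intro j
      simp only [hfdef]
      push_cast
      rw [show (2 * ((j:ℝ) + 2) + 1) * a = (2 * (j:ℝ) + 3) * a + 2 * a by ring,
        show (2 * (j:ℝ) + 1) * a = (2 * (j:ℝ) + 3) * a - 2 * a by ring,
        show (2 * ((j:ℝ) + 1) + 1) * a = (2 * (j:ℝ) + 3) * a by ring,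
        Real.cos_add, Real.cos_sub, hθa]
      ring
    · -- f N = 0
      simp only [hfdef]
      have hden : (0:ℝ) < 2 * (N:ℝ) + 1 := by positivity
      have harg : (2 * (N:ℝ) + 1) * a = (k:ℝ) * π + π / 2 := by
        rw [ha, hθ]
        unfold th1
        field_simp
      rw [harg, Real.cos_add, Real.cos_pi_div_two, Real.sin_nat_mul_pi]
      ring

noncomputable def th2 (N k : ℕ) : ℝ := (k + 1) * π / (N + 1)

lemma th2_pos (N k : ℕ) : 0 < th2 N k := by
  unfold th2
  have := Real.pi_pos
  apply div_pos (by positivity) (by positivity)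

lemma th2_lt_pi {k : ℕ} (hk : k < N) : th2 N k < π := by
  unfold th2
  have hp := Real.pi_pos
  rw [div_lt_iff₀ (by positivity)]
  have hkN : (k : ℝ) + 1 ≤ (N : ℝ) := by exact_mod_cast hk
  nlinarith

lemma eigen2 (hN : 0 < N) (T : Matrix (Fin N) (Fin N) ℝ)
    (hT : ∀ i j, T i j =
      if i = j then (if (i : ℕ) = 0 then (2:ℝ) else 2)
      else if (i : ℕ) + 1 = (j : ℕ) ∨ (j : ℕ) + 1 = (i : ℕ) then -1 else 0)
    (k : Fin N) :
    ∃ v : Fin N → ℝ, v ≠ 0 ∧ T *ᵥ v = (2 - 2 * Real.cos (th2 N k)) • v := by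
  set θ := th2 N k with hθ
  set f : ℕ → ℝ := fun n => Real.sin ((n + 1) * θ) with hfdef
  refine ⟨fun j : Fin N => f j, ?_, ?_⟩
  · intro h
    have h0 := congrFun h ⟨0, hN⟩
    have hθp := th2_pos N k
    have hθπ := th2_lt_pi k.isLt
    have hpos : 0 < Real.sin θ := Real.sin_pos_of_pos_of_lt_pi hθp hθπ
    simp only [hfdef, Pi.zero_apply] at h0
    norm_num at h0
    linarith [hpos, h0.le, h0.ge]
  · apply tri_eig 2 T hT f (2 - 2 * Real.cos θ)
    · simp only [hfdef]
      push_cast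
      rw [show ((0:ℝ) + 1) * θ = θ by ring, show ((1:ℝ) + 1) * θ = 2 * θ by ring,
        Real.sin_two_mul]
      ring
    · intro j
      simp only [hfdef]
      push_cast
      rw [show ((j:ℝ) + 2 + 1) * θ = ((j:ℝ) + 2) * θ + θ by ring,
        show ((j:ℝ) + 1) * θ = ((j:ℝ) + 2) * θ - θ by ring,
        show ((j:ℝ) + 1 + 1) * θ = ((j:ℝ) + 2) * θ by ring,
        Real.sin_add, Real.sin_sub]
      ring
    · simp only [hfdef]
      have hden : (0:ℝ) < (N:ℝ) + 1 := by positivity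
      have harg : ((N:ℝ) + 1) * θ = ((k + 1 : ℕ) : ℝ) * π := by
        rw [hθ]
        unfold th2
        field_simp
        push_cast
        ring
      rw [harg, Real.sin_nat_mul_pi]

lemma lam1_inj (N : ℕ) : Function.Injective (fun k : Fin N => 2 - 2 * Real.cos (th1 N k)) := by
  intro a b hab
  have hπ := Real.pi_pos
  have hc : Real.cos (th1 N a) = Real.cos (th1 N b) := by
    simp only at hab
    linarith
  have hmem : ∀ k : Fin N, th1 N k ∈ Set.Icc 0 π := fun k =>
    ⟨(th1_pos N k).le, (th1_lt_pi k.isLt).le⟩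
  have heq : th1 N (a : ℕ) = th1 N (b : ℕ) := Real.injOn_cos (hmem a) (hmem b) hc
  unfold th1 at heq
  have hden : (0:ℝ) < 2 * (N:ℝ) + 1 := by positivity
  rw [div_eq_div_iff hden.ne' hden.ne'] at heq
  have h1 := mul_right_cancel₀ hden.ne' heq
  have h2 := mul_right_cancel₀ Real.pi_ne_zero h1
  have : (a : ℝ) = (b : ℝ) := by linarith
  exact Fin.ext (by exact_mod_cast this)

end Stmt17Aux


open Stmt17Aux in
/-- the tridiagonal matrix `T_l` with diagonal `(l,2,…,2)`, `l ∈ {1,2}`,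
and off-diagonals `−1` has eigenvalues `λ_k = 2 − 2cos(π(k−1+l/2)/(N+l/2))`,
`k = 1,…,N`; it is positive definite, and for `l = 1` every eigenvalue is at least
`2 − 2cos(π/(2N+1)) > 0`. -/
theorem stmt_17 (N : ℕ) (hN : 0 < N) (l : ℝ) (hl : l = 1 ∨ l = 2)
    (T : Matrix (Fin N) (Fin N) ℝ)
    (hT : ∀ i j, T i j =
      if i = j then (if (i : ℕ) = 0 then l else 2)
      else if (i : ℕ) + 1 = (j : ℕ) ∨ (j : ℕ) + 1 = (i : ℕ) then -1 else 0) :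
    (∀ k : Fin N, ∃ v : Fin N → ℝ, v ≠ 0 ∧
      T *ᵥ v = (2 - 2 * Real.cos (π * (((k : ℕ) + 1 : ℝ) - 1 + l / 2) / (N + l / 2))) • v) ∧
    T.PosDef ∧
    (l = 1 → (0 < 2 - 2 * Real.cos (π / (2 * N + 1)) ∧
      ∀ (μ : ℝ) (v : Fin N → ℝ), v ≠ 0 → T *ᵥ v = μ • v →
        2 - 2 * Real.cos (π / (2 * N + 1)) ≤ μ)) := by
  have hπ := Real.pi_pos
  rcases hl with hl1 | hl2
  · subst hl1
    have hden : (0:ℝ) < 2 * (N:ℝ) + 1 := by positivity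
    have hden2 : (0:ℝ) < (N:ℝ) + 1/2 := by positivity
    refine ⟨?_, tri_posdef hN 1 le_rfl T hT, ?_⟩
    · intro k
      obtain ⟨v, hv0, hv⟩ := eigen1 hN T hT k
      refine ⟨v, hv0, ?_⟩
      have he : π * (((k : ℕ) + 1 : ℝ) - 1 + 1 / 2) / ((N : ℝ) + 1 / 2) = th1 N k := by
        unfold th1
        rw [div_eq_div_iff hden2.ne' hden.ne']
        ring
      rw [he]
      exact hv
    · intro _
      have hle1 : π / (2 * (N:ℝ) + 1) ≤ π := by
        apply div_le_self hπ.le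
        have : (1:ℝ) ≤ (N:ℝ) + 1 := by
          have : (0:ℝ) ≤ (N:ℝ) := Nat.cast_nonneg N
          linarith
        linarith
      have hpos1 : 0 < π / (2 * (N:ℝ) + 1) := by positivity
      constructor
      · have h1 : Real.cos (π / (2 * (N:ℝ) + 1)) < 1 := by
          have := Real.cos_lt_cos_of_nonneg_of_le_pi (le_refl 0) hle1 hpos1
          rwa [Real.cos_zero] at this
        linarith
      · intro μ v hv hμ
        choose V hV0 hTV using fun k => eigen1 hN T hT k
        obtain ⟨k, hk⟩ := eig_complete hN T
          (fun k : Fin N => 2 - 2 * Real.cos (th1 N k)) (lam1_inj N) V hV0 hTV hv hμ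
        have hle : π / (2 * (N:ℝ) + 1) ≤ th1 N k := by
          unfold th1
          rw [div_le_div_iff₀ hden hden]
          have h0 : (0:ℝ) ≤ (k:ℕ) := Nat.cast_nonneg _
          nlinarith [mul_nonneg h0 (mul_pos hπ hden).le]
        have hc := Real.cos_le_cos_of_nonneg_of_le_pi hpos1.le (th1_lt_pi k.isLt).le hle
        rw [hk]
        linarith
  · subst hl2
    have hdenn : (0:ℝ) < (N:ℝ) + 1 := by positivity
    have hdenn2 : (0:ℝ) < (N:ℝ) + 2/2 := by positivity
    have hT' : ∀ i j, T i j =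
        if i = j then (if (i : ℕ) = 0 then (2:ℝ) else 2)
        else if (i : ℕ) + 1 = (j : ℕ) ∨ (j : ℕ) + 1 = (i : ℕ) then -1 else 0 := hT
    refine ⟨?_, tri_posdef hN 2 (by norm_num) T hT, ?_⟩
    · intro k
      obtain ⟨v, hv0, hv⟩ := eigen2 hN T hT' k
      refine ⟨v, hv0, ?_⟩
      have he : π * (((k : ℕ) + 1 : ℝ) - 1 + 2 / 2) / ((N : ℝ) + 2 / 2) = th2 N k := by
        unfold th2
        rw [div_eq_div_iff hdenn2.ne' hdenn.ne']
        ring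
      rw [he]
      exact hv
    · intro h
      norm_num at h
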